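/- Let M ∈ GLₙ(ℤ), let s be a natural number, let r' be a multiple of the order of the reduction M_s ∈ GLₙ(ℤ/s) of M modulo s, and set r := r'·s. Let C be a cyclic subgroup of (ℤ/s)ⁿ ⋊_{M_s} ℤ/r whose intersection with (ℤ/s)ⁿ is nontrivial. Then there exist a prime p and a natural number N ≥ 1 such that: (1) p^N divides r = r'·s; (2) p^N does not divide the order of pr_{r,s}(C); and (3) p divides the order of C ∩ (ℤ/s)ⁿ. -/

import Mathlib

open Multiplicative

/-- The homomorphism `ℤ/r → G` sending the generator `1` of `ℤ/r` to a given element `g`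
satisfying `g ^ r = 1` (and the trivial homomorphism if `g ^ r ≠ 1`). -/
noncomputable def zmodPowHom {G : Type*} [Group G] (r : ℕ) (g : G) :
    Multiplicative (ZMod r) →* G := by
  classical
  exact if h : g ^ (r : ℕ) = 1 then
    AddMonoidHom.toMultiplicativeLeft
      (ZMod.lift r ⟨(zmultiplesHom (Additive G)) (Additive.ofMul g), by
        show ((r : ℕ) : ℤ) • Additive.ofMul g = 0
        rw [← ofMul_zpow, zpow_natCast, h]; rfl⟩)
  else 1

/-- The reduction `M_s ∈ GLₙ(ℤ/s)` of a matrix `M ∈ GLₙ(ℤ)` modulo `s`. -/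
def glReduction (n s : ℕ) (M : GL (Fin n) ℤ) : GL (Fin n) (ZMod s) :=
  Matrix.GeneralLinearGroup.map (Int.castRingHom (ZMod s)) M

/-- The automorphism of `(ℤ/s)ⁿ` (written multiplicatively) given by the matrix
`M_s ∈ GLₙ(ℤ/s)`. -/
def glAut (n s : ℕ) (M : GL (Fin n) ℤ) : MulAut (Multiplicative (Fin n → ZMod s)) :=
  AddEquiv.toMultiplicative
    (((LinearMap.GeneralLinearGroup.generalLinearEquiv (ZMod s) (Fin n → ZMod s))
        (Matrix.GeneralLinearGroup.toLin (glReduction n s M))).toAddEquiv)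

/-- The action of `ℤ/r` on `(ℤ/s)ⁿ` in which the fixed generator `1` of `ℤ/r` acts by the
reduction `M_s` of `M` modulo `s` (assuming the order of `M_s` divides `r`). -/
noncomputable def glTwist (n s r : ℕ) (M : GL (Fin n) ℤ) :
    Multiplicative (ZMod r) →* MulAut (Multiplicative (Fin n → ZMod s)) :=
  zmodPowHom r (glAut n s M)

/-- The semidirect product `(ℤ/s)ⁿ ⋊_{M_s} ℤ/r`. -/
noncomputable def MatSdp (n s r : ℕ) (M : GL (Fin n) ℤ) : Type :=
  Multiplicative (Fin n → ZMod s) ⋊[glTwist n s r M] Multiplicative (ZMod r)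

noncomputable instance (n s r : ℕ) (M : GL (Fin n) ℤ) : Group (MatSdp n s r M) :=
  inferInstanceAs (Group (Multiplicative (Fin n → ZMod s) ⋊[glTwist n s r M]
    Multiplicative (ZMod r)))

/-- The copy of `(ℤ/s)ⁿ` inside `(ℤ/s)ⁿ ⋊_{M_s} ℤ/r`. -/
noncomputable def MatSdp.A (n s r : ℕ) (M : GL (Fin n) ℤ) : Subgroup (MatSdp n s r M) :=
  (SemidirectProduct.inl (φ := glTwist n s r M)).range

/-- The element of `(ℤ/s)ⁿ ⋊_{M_s} ℤ/r` given by `v ∈ (ℤ/s)ⁿ`. -/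
noncomputable def MatSdp.inlV (n s r : ℕ) (M : GL (Fin n) ℤ) (v : Fin n → ZMod s) :
    MatSdp n s r M :=
  SemidirectProduct.inl (ofAdd v)

/-- The canonical projection `pr_{r,s} : (ℤ/s)ⁿ ⋊_{M_s} ℤ/r → ℤ/r`. -/
noncomputable def MatSdp.pr (n s r : ℕ) (M : GL (Fin n) ℤ) :
    MatSdp n s r M →* Multiplicative (ZMod r) :=
  SemidirectProduct.rightHom

/-- The fixed generator `t` of `ℤ/r` inside `(ℤ/s)ⁿ ⋊_{M_s} ℤ/r`. -/
noncomputable def MatSdp.t (n s r : ℕ) (M : GL (Fin n) ℤ) : MatSdp n s r M :=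
  SemidirectProduct.inr (ofAdd (1 : ZMod r))

/- ## Auxiliary lemmas -/

lemma zmodPowHom_mem_zpowers {G : Type*} [Group G] (r : ℕ) (g : G)
    (x : Multiplicative (ZMod r)) : zmodPowHom r g x ∈ Subgroup.zpowers g := by
  classical
  unfold zmodPowHom
  split_ifs with h
  · refine ⟨(ZMod.cast x.toAdd : ℤ), ?_⟩
    rw [show ∀ F : ZMod r →+ Additive G,
        (AddMonoidHom.toMultiplicativeLeft F) x = (F x.toAdd).toMul from fun F => rfl]
    conv_rhs => rw [show x.toAdd = ((ZMod.cast x.toAdd : ℤ) : ZMod r) from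
      (ZMod.intCast_zmod_cast _).symm]
    rw [ZMod.lift_coe]
    rfl
  · exact Subgroup.one_mem _

def autOfGL (n s : ℕ) : GL (Fin n) (ZMod s) →* MulAut (Multiplicative (Fin n → ZMod s)) where
  toFun A := AddEquiv.toMultiplicative
    (((LinearMap.GeneralLinearGroup.generalLinearEquiv (ZMod s) (Fin n → ZMod s))
        (Matrix.GeneralLinearGroup.toLin A)).toAddEquiv)
  map_one' := by ext v; simp
  map_mul' := by intro A B; ext v; simp

lemma glAut_pow_eq_one (n s r' : ℕ) (M : GL (Fin n) ℤ)
    (hr' : orderOf (glReduction n s M) ∣ r') : glAut n s M ^ r' = 1 := by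
  have : glAut n s M = autOfGL n s (glReduction n s M) := rfl
  rw [this, ← map_pow, orderOf_dvd_iff_pow_eq_one.mp hr', map_one]

lemma glTwist_pow_eq_one {n s r' : ℕ} (r : ℕ) {M : GL (Fin n) ℤ}
    (h1 : glAut n s M ^ r' = 1) (x : Multiplicative (ZMod r)) :
    glTwist n s r M x ^ r' = 1 := by
  obtain ⟨k, hk⟩ := zmodPowHom_mem_zpowers r (glAut n s M) x
  show zmodPowHom r (glAut n s M) x ^ r' = 1
  rw [← hk, ← zpow_natCast, ← zpow_mul, mul_comm, zpow_mul, zpow_natCast, h1, one_zpow]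

lemma sdp_pow_of_right_one {N H : Type*} [Group N] [Group H] {φ : H →* MulAut N}
    (w : N) (u : H) (hu : φ u = 1) (k : ℕ) :
    (⟨w, u⟩ : N ⋊[φ] H) ^ k = ⟨w ^ k, u ^ k⟩ := by
  induction k with
  | zero => simp
  | succ k ih =>
    rw [pow_succ, ih]
    show (⟨w ^ k * (φ (u ^ k)) w, u ^ k * u⟩ : N ⋊[φ] H) = _
    rw [map_pow, hu, one_pow, MulAut.one_apply, ← pow_succ, ← pow_succ]

lemma multZMod_pow_self (m : ℕ) (u : Multiplicative (ZMod m)) : u ^ m = 1 := by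
  apply Multiplicative.toAdd.injective
  rw [toAdd_pow, toAdd_one, nsmul_eq_mul, ZMod.natCast_self, zero_mul]

lemma multPi_pow_self (n s : ℕ) (w : Multiplicative (Fin n → ZMod s)) : w ^ s = 1 := by
  apply Multiplicative.toAdd.injective
  rw [toAdd_pow, toAdd_one]
  funext i
  show s • (Multiplicative.toAdd w i) = 0
  rw [nsmul_eq_mul, ZMod.natCast_self, zero_mul]

/-- Exponent lemma: every element of the semidirect product satisfies `g ^ (r' * s) = 1`. -/
lemma sdp_exp (n s r' : ℕ) (M : GL (Fin n) ℤ)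
    (hr' : orderOf (glReduction n s M) ∣ r')
    (g : Multiplicative (Fin n → ZMod s) ⋊[glTwist n s (r' * s) M]
      Multiplicative (ZMod (r' * s))) :
    g ^ (r' * s) = 1 := by
  have h1 : glAut n s M ^ r' = 1 := glAut_pow_eq_one n s r' M hr'
  rw [pow_mul]
  have h2 : (g ^ r').right = g.right ^ r' :=
    map_pow (SemidirectProduct.rightHom
      (φ := glTwist n s (r' * s) M)) g r'
  have hu : glTwist n s (r' * s) M ((g ^ r').right) = 1 := by
    rw [h2, map_pow]
    exact glTwist_pow_eq_one _ h1 _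
  have h3 := sdp_pow_of_right_one (φ := glTwist n s (r' * s) M)
    (g ^ r').left (g ^ r').right hu s
  rw [show (⟨(g ^ r').left, (g ^ r').right⟩ :
    Multiplicative (Fin n → ZMod s) ⋊[glTwist n s (r' * s) M]
      Multiplicative (ZMod (r' * s))) = g ^ r' from rfl] at h3
  rw [h3, h2, ← pow_mul, multPi_pow_self, multZMod_pow_self]
  rfl

lemma multZMod_eq_one_of_zpow {m : ℕ} (hm : m = 0) (y : Multiplicative (ZMod m))
    (k : ℤ) (hk : k ≠ 0) (h : y ^ k = 1) : y = 1 := by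
  subst hm
  apply Multiplicative.toAdd.injective
  have h3 : k • (Multiplicative.toAdd y : ℤ) = 0 := by
    have h2 := congrArg Multiplicative.toAdd h
    rw [toAdd_zpow, toAdd_one] at h2
    exact h2
  exact (smul_eq_zero.mp h3).resolve_left hk


/-- Let `M ∈ GLₙ(ℤ)`, let `s` be a natural number, let `r'` be a multiple
of the order of the reduction `M_s ∈ GLₙ(ℤ/s)` of `M` modulo `s`, and set `r := r' · s`.
Let `C` be a cyclic subgroup of `(ℤ/s)ⁿ ⋊_{M_s} ℤ/r` whose intersection with `(ℤ/s)ⁿ` is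
nontrivial.  Then there exist a prime `p` and a natural number `N ≥ 1` such that
(1) `p^N` divides `r = r'·s`;  (2) `p^N` does not divide the order of `pr_{r,s}(C)`; and
(3) `p` divides the order of `C ∩ (ℤ/s)ⁿ`. -/
theorem exists_prime_power_of_cyclic_subgroup
    (n s r' : ℕ) (M : GL (Fin n) ℤ)
    (hr' : orderOf (glReduction n s M) ∣ r')
    (C : Subgroup (MatSdp n s (r' * s) M))
    (hC : IsCyclic C)
    (hCA : C ⊓ MatSdp.A n s (r' * s) M ≠ ⊥) :
    ∃ (p N : ℕ), p.Prime ∧ 1 ≤ N ∧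
      p ^ N ∣ r' * s ∧
      ¬ p ^ N ∣ Nat.card (Subgroup.map (MatSdp.pr n s (r' * s) M) C) ∧
      p ∣ Nat.card ↥(C ⊓ MatSdp.A n s (r' * s) M) := by
  classical
  obtain ⟨gc, hgc⟩ := hC.exists_generator
  have hA : MatSdp.A n s (r' * s) M
      = (MatSdp.pr n s (r' * s) M).ker :=
    SemidirectProduct.range_inl_eq_ker_rightHom
  by_cases hrz : r' * s = 0
  · -- degenerate case `r = 0`
    -- first: the image of `C` under `pr` is trivial
    obtain ⟨x0, hx0⟩ := Subgroup.ne_bot_iff_exists_ne_one.mp hCA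
    have hx0C : (x0 : MatSdp n s (r' * s) M) ∈ C := x0.2.1
    have hx0A : (x0 : MatSdp n s (r' * s) M) ∈ MatSdp.A n s (r' * s) M := x0.2.2
    obtain ⟨k, hk⟩ := Subgroup.mem_zpowers_iff.mp (hgc ⟨x0, hx0C⟩)
    have hk0 : k ≠ 0 := by
      rintro rfl
      rw [zpow_zero] at hk
      apply hx0
      apply Subtype.ext
      simpa using congrArg Subtype.val hk.symm
    have hprx0 : MatSdp.pr n s (r' * s) M x0 = 1 := by
      simp only [hA, MonoidHom.mem_ker] at hx0A
      exact hx0A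
    have hy : MatSdp.pr n s (r' * s) M gc.val = 1 := by
      refine multZMod_eq_one_of_zpow hrz _ k hk0 ?_
      rw [← map_zpow]
      have : (gc.val : MatSdp n s (r' * s) M) ^ k = x0 := by
        have := congrArg Subtype.val hk
        rw [SubgroupClass.coe_zpow] at this
        exact this
      rw [this]
      exact hprx0
    have hmap : Subgroup.map (MatSdp.pr n s (r' * s) M) C = ⊥ := by
      rw [Subgroup.eq_bot_iff_forall]
      rintro z ⟨x, hxC, rfl⟩
      obtain ⟨j, hj⟩ := Subgroup.mem_zpowers_iff.mp (hgc ⟨x, hxC⟩)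
      have hxj : (gc.val : MatSdp n s (r' * s) M) ^ j = x := by
        have := congrArg Subtype.val hj
        rw [SubgroupClass.coe_zpow] at this
        exact this
      rw [← hxj, map_zpow, hy, one_zpow]
    rcases eq_or_ne (Nat.card ↥(C ⊓ MatSdp.A n s (r' * s) M)) 0 with h0 | h0
    · refine ⟨2, 1, Nat.prime_two, le_refl 1, ?_, ?_, ?_⟩
      · rw [hrz]; exact dvd_zero _
      · rw [hmap, Subgroup.card_bot, pow_one]
        omega
      · rw [h0]; exact dvd_zero 2
    · have h1 : Nat.card ↥(C ⊓ MatSdp.A n s (r' * s) M) ≠ 1 := by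
        simp only [ne_eq, Subgroup.card_eq_one]; exact hCA
      refine ⟨(Nat.card ↥(C ⊓ MatSdp.A n s (r' * s) M)).minFac, 1,
        Nat.minFac_prime h1, le_refl 1, ?_, ?_, Nat.minFac_dvd _⟩
      · exact ⟨0, by rw [mul_zero]; exact hrz⟩
      · rw [hmap, Subgroup.card_bot, pow_one, Nat.dvd_one]
        exact (Nat.minFac_prime h1).ne_one
  · -- main case `r ≠ 0`
    have hs : s ≠ 0 := fun h => hrz (by rw [h, mul_zero])
    have hr0 : r' ≠ 0 := fun h => hrz (by rw [h, zero_mul])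
    haveI : NeZero s := ⟨hs⟩
    haveI : NeZero (r' * s) := ⟨hrz⟩
    haveI : Finite (Multiplicative (Fin n → ZMod s)
        ⋊[glTwist n s (r' * s) M] Multiplicative (ZMod (r' * s))) := by
      refine Finite.of_injective (fun g => (g.left, g.right)) ?_
      rintro ⟨a1, a2⟩ ⟨b1, b2⟩ h
      simp only [Prod.mk.injEq] at h
      obtain ⟨rfl, rfl⟩ := h
      rfl
    haveI : Finite (MatSdp n s (r' * s) M) :=
      inferInstanceAs (Finite (Multiplicative (Fin n → ZMod s)
        ⋊[glTwist n s (r' * s) M] Multiplicative (ZMod (r' * s))))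
    have hexp : ∀ g : MatSdp n s (r' * s) M, g ^ (r' * s) = 1 :=
      fun g => sdp_exp n s r' M hr' g
    set f := (MatSdp.pr n s (r' * s) M).comp C.subtype with hf
    have hker : f.ker = (C ⊓ MatSdp.A n s (r' * s) M).subgroupOf C := by
      ext x
      simp only [MonoidHom.mem_ker, hf, MonoidHom.comp_apply, Subgroup.coe_subtype,
        Subgroup.mem_subgroupOf, Subgroup.mem_inf]
      simp only [hA, MonoidHom.mem_ker]
      exact ⟨fun h => ⟨x.2, h⟩, fun h => h.2⟩
    have hker_card : Nat.card f.ker = Nat.card ↥(C ⊓ MatSdp.A n s (r' * s) M) := by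
      rw [hker]
      exact Nat.card_congr (Subgroup.subgroupOfEquivOfLe inf_le_left).toEquiv
    have hrange : f.range = Subgroup.map (MatSdp.pr n s (r' * s) M) C := by
      rw [hf, MonoidHom.range_comp, Subgroup.range_subtype]
    have hrange_card : Nat.card f.range
        = Nat.card (Subgroup.map (MatSdp.pr n s (r' * s) M) C) := by rw [hrange]
    have hcard : Nat.card ↥C = Nat.card ↥(C ⊓ MatSdp.A n s (r' * s) M)
        * Nat.card (Subgroup.map (MatSdp.pr n s (r' * s) M) C) := by
      rw [← hker_card, ← hrange_card, Subgroup.card_eq_card_quotient_mul_card_subgroup f.ker,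
        Nat.card_congr (QuotientGroup.quotientKerEquivRange f).toEquiv, mul_comm]
    have hCd : Nat.card ↥C ∣ r' * s := by
      rw [← orderOf_eq_card_of_forall_mem_zpowers hgc]
      apply orderOf_dvd_of_pow_eq_one
      apply Subtype.ext
      rw [SubmonoidClass.coe_pow]
      rw [hexp gc.val]
      rfl
    haveI : Nonempty ↥(C ⊓ MatSdp.A n s (r' * s) M) := ⟨1⟩
    haveI : Nonempty (Subgroup.map (MatSdp.pr n s (r' * s) M) C) := ⟨1⟩
    have hK1 : Nat.card ↥(C ⊓ MatSdp.A n s (r' * s) M) ≠ 1 := by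
      simp only [ne_eq, Subgroup.card_eq_one]; exact hCA
    have hQ0 : Nat.card (Subgroup.map (MatSdp.pr n s (r' * s) M) C) ≠ 0 := Nat.card_pos.ne'
    set p := (Nat.card ↥(C ⊓ MatSdp.A n s (r' * s) M)).minFac with hp'
    have hp : p.Prime := Nat.minFac_prime hK1
    set f0 := (Nat.card (Subgroup.map (MatSdp.pr n s (r' * s) M) C)).factorization p with hf0
    refine ⟨p, f0 + 1, hp, Nat.le_add_left 1 f0, ?_, ?_, Nat.minFac_dvd _⟩
    · refine dvd_trans ?_ hCd
      rw [hcard, pow_succ, mul_comm (p ^ f0) p]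
      exact mul_dvd_mul (Nat.minFac_dvd _) (Nat.ordProj_dvd _ _)
    · rw [hp.pow_dvd_iff_le_factorization hQ0, ← hf0]
      omega
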